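/- arXiv:1903.01836 — 2 statements merged into one kernel-verified Lean document; each statement's English description precedes it below -/
import Mathlib

section
/- Let A and B be n×n complex matrices that can be simultaneously conjugated to upper-triangular form, and suppose the commutator [A,B] = AB − BA has nonzero entries only in the first row (i.e. its image is contained in the span of e₁), and suppose e₁ is a cyclic vector for the pair (A,B). Then [A,B] = 0. -/
def IsCyclicVec (n : ℕ) (A B : Matrix (Fin n) (Fin n) ℂ) (v : Fin n → ℂ) : Prop :=
  ∀ S : Submodule ℂ (Fin n → ℂ), v ∈ S → (∀ x ∈ S, A.mulVec x ∈ S) →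
    (∀ x ∈ S, B.mulVec x ∈ S) → S = ⊤

/-- if A, B are simultaneously triangularizable, [A,B] has nonzero entries
only in the first row, and e₁ is cyclic for (A,B), then [A,B] = 0. -/
theorem stmt3 (n : ℕ) (A B : Matrix (Fin (n + 1)) (Fin (n + 1)) ℂ)
    (g : (Matrix (Fin (n + 1)) (Fin (n + 1)) ℂ)ˣ)
    (hgA : ∀ i j : Fin (n + 1), j < i →
      ((g : Matrix (Fin (n + 1)) (Fin (n + 1)) ℂ) * A *
        ((g⁻¹ : (Matrix (Fin (n + 1)) (Fin (n + 1)) ℂ)ˣ) : Matrix (Fin (n + 1)) (Fin (n + 1)) ℂ)) i j = 0)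
    (hgB : ∀ i j : Fin (n + 1), j < i →
      ((g : Matrix (Fin (n + 1)) (Fin (n + 1)) ℂ) * B *
        ((g⁻¹ : (Matrix (Fin (n + 1)) (Fin (n + 1)) ℂ)ˣ) : Matrix (Fin (n + 1)) (Fin (n + 1)) ℂ)) i j = 0)
    (hrow : ∀ i j : Fin (n + 1), i ≠ 0 → (A * B - B * A) i j = 0)
    (hcyc : IsCyclicVec (n + 1) A B (fun x => if x = 0 then 1 else 0)) :
    A * B = B * A := by
  by_contra hne
  have hC : A * B - B * A ≠ 0 := sub_ne_zero.mpr hne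
  set T : Matrix (Fin (n + 1)) (Fin (n + 1)) ℂ :=
    (g : Matrix (Fin (n + 1)) (Fin (n + 1)) ℂ) with hTdef
  set Ti : Matrix (Fin (n + 1)) (Fin (n + 1)) ℂ :=
    ((g⁻¹ : (Matrix (Fin (n + 1)) (Fin (n + 1)) ℂ)ˣ) :
      Matrix (Fin (n + 1)) (Fin (n + 1)) ℂ) with hTidef
  have hTiT : Ti * T = 1 := g.inv_mul
  have hTTi : T * Ti = 1 := g.mul_inv
  have hconj : ∀ (M : Matrix (Fin (n+1)) (Fin (n+1)) ℂ) (v : Fin (n+1) → ℂ),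
      T.mulVec (M.mulVec v) = (T * M * Ti).mulVec (T.mulVec v) := by
    intro M v
    rw [Matrix.mulVec_mulVec, Matrix.mulVec_mulVec, mul_assoc (T * M) Ti T, hTiT, mul_one]
  set l : Fin (n+1) := Fin.last n with hl
  have hlt : ∀ j : Fin (n+1), j ≠ l → j < l := fun j hj => lt_of_le_of_ne (Fin.le_last j) hj
  set S : Submodule ℂ (Fin (n+1) → ℂ) :=
    LinearMap.ker ((LinearMap.proj l).comp (Matrix.mulVecLin T)) with hS
  have hmem : ∀ v, v ∈ S ↔ T.mulVec v l = 0 := by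
    intro v
    simp [hS, Matrix.mulVecLin_apply]
  -- invariance under triangular matrices
  have hinv : ∀ (M : Matrix (Fin (n+1)) (Fin (n+1)) ℂ),
      (∀ j, j < l → (T * M * Ti) l j = 0) →
      ∀ v ∈ S, M.mulVec v ∈ S := by
    intro M hM v hv
    rw [hmem] at hv ⊢
    rw [hconj]
    show ∑ j, (T * M * Ti) l j * (T.mulVec v) j = 0
    refine Finset.sum_eq_zero fun j _ => ?_
    by_cases hj : j = l
    · subst hj; rw [hv, mul_zero]
    · rw [hM j (hlt j hj), zero_mul]
  -- last row of conjugated commutator is zero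
  have hAB : T * A * Ti * (T * B * Ti) = T * (A * B) * Ti := by
    calc T * A * Ti * (T * B * Ti) = T * A * (Ti * T) * (B * Ti) := by noncomm_ring
    _ = T * (A * B) * Ti := by rw [hTiT]; noncomm_ring
  have hBA : T * B * Ti * (T * A * Ti) = T * (B * A) * Ti := by
    calc T * B * Ti * (T * A * Ti) = T * B * (Ti * T) * (A * Ti) := by noncomm_ring
    _ = T * (B * A) * Ti := by rw [hTiT]; noncomm_ring
  have hfact : T * (A * B - B * A) * Ti
      = (T * A * Ti) * (T * B * Ti) - (T * B * Ti) * (T * A * Ti) := by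
    rw [hAB, hBA]; noncomm_ring
  have hCrow : ∀ k, (T * (A * B - B * A) * Ti) l k = 0 := by
    intro k
    rw [hfact]
    rw [Matrix.sub_apply, Matrix.mul_apply, Matrix.mul_apply]
    have s1 : ∑ m, (T * A * Ti) l m * (T * B * Ti) m k
        = (T * A * Ti) l l * (T * B * Ti) l k :=
      Finset.sum_eq_single_of_mem l (Finset.mem_univ l)
        (fun m _ hm => by rw [hgA l m (hlt m hm), zero_mul])
    have s2 : ∑ m, (T * B * Ti) l m * (T * A * Ti) m k
        = (T * B * Ti) l l * (T * A * Ti) l k :=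
      Finset.sum_eq_single_of_mem l (Finset.mem_univ l)
        (fun m _ hm => by rw [hgB l m (hlt m hm), zero_mul])
    rw [s1, s2]
    by_cases hk : k = l
    · subst hk; ring
    · rw [hgB l k (hlt k hk), hgA l k (hlt k hk)]; ring
  have hCim : ∀ v, T.mulVec ((A * B - B * A).mulVec v) l = 0 := by
    intro v
    rw [hconj]
    show ∑ k, (T * (A * B - B * A) * Ti) l k * (T.mulVec v) k = 0
    exact Finset.sum_eq_zero fun k _ => by rw [hCrow k, zero_mul]
  -- find a nonzero entry in row 0
  obtain ⟨j, hj⟩ : ∃ j, (A * B - B * A) 0 j ≠ 0 := by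
    by_contra h
    push_neg at h
    exact hC (Matrix.ext fun i k => by
      by_cases hi : i = 0
      · subst hi; exact h k
      · exact hrow i k hi)
  have hCe : (A * B - B * A).mulVec (fun x => if x = j then (1:ℂ) else 0)
      = ((A * B - B * A) 0 j) • (fun x => if x = 0 then (1:ℂ) else 0) := by
    funext i
    have : (A * B - B * A).mulVec (fun x => if x = j then (1:ℂ) else 0) i
        = (A * B - B * A) i j := by
      simp [Matrix.mulVec, dotProduct, mul_ite]
    rw [this]
    by_cases hi : i = 0
    · subst hi; simp
    · simp [hi, hrow i j hi]
  have he0 : (fun x => if x = 0 then (1:ℂ) else 0) ∈ S := by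
    rw [hmem]
    have h0 := hCim (fun x => if x = j then (1:ℂ) else 0)
    rw [hCe, Matrix.mulVec_smul] at h0
    have : (A * B - B * A) 0 j * T.mulVec (fun x => if x = 0 then (1:ℂ) else 0) l = 0 := h0
    exact (mul_eq_zero.mp this).resolve_left hj
  have hStop : S = ⊤ :=
    hcyc S he0 (hinv A (fun k hk => hgA l k hk)) (hinv B (fun k hk => hgB l k hk))
  -- contradiction: the vector g⁻¹ e_last is not in S
  have hall : ∀ v, T.mulVec v l = 0 := fun v =>
    (hmem v).1 (hStop ▸ Submodule.mem_top)
  have := hall (Ti.mulVec (fun x => if x = l then (1:ℂ) else 0))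
  rw [Matrix.mulVec_mulVec, hTTi, Matrix.one_mulVec] at this
  simp at this
end

section
/- Given matrices X, Y ∈ Mat_k(ℂ), i ∈ Mat_{k×2}(ℂ), j ∈ Mat_{2×k}(ℂ), define (k+1)×(k+1) matrices X̂ = [[0, −j₂],[i₁, X]] and Ŷ = [[0, j₁],[i₂, Y]], where i_s is the s-th column of i and j_s the s-th row of j. Then [X,Y] + i j = 0 holds if and only if the commutator [X̂,Ŷ] has nonzero entries only in the first row and the first column. -/
open Matrix

/-- row vector as a 1×k matrix -/
def rowm {k : ℕ} (v : Fin k → ℂ) : Matrix (Fin 1) (Fin k) ℂ := Matrix.of fun _ c => v c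

/-- column vector as a k×1 matrix -/
def colm {k : ℕ} (v : Fin k → ℂ) : Matrix (Fin k) (Fin 1) ℂ := Matrix.of fun r _ => v r

/-- X̂ = [[0, −j₂],[i₁, X]] -/
def hatX {k : ℕ} (X : Matrix (Fin k) (Fin k) ℂ) (i : Matrix (Fin k) (Fin 2) ℂ)
    (j : Matrix (Fin 2) (Fin k) ℂ) : Matrix (Fin 1 ⊕ Fin k) (Fin 1 ⊕ Fin k) ℂ :=
  Matrix.fromBlocks 0 (-(rowm (fun c => j 1 c))) (colm (fun r => i r 0)) X

/-- Ŷ = [[0, j₁],[i₂, Y]] -/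
def hatY {k : ℕ} (Y : Matrix (Fin k) (Fin k) ℂ) (i : Matrix (Fin k) (Fin 2) ℂ)
    (j : Matrix (Fin 2) (Fin k) ℂ) : Matrix (Fin 1 ⊕ Fin k) (Fin 1 ⊕ Fin k) ℂ :=
  Matrix.fromBlocks 0 (rowm (fun c => j 0 c)) (colm (fun r => i r 1)) Y

lemma key (k : ℕ) (X Y : Matrix (Fin k) (Fin k) ℂ) (i : Matrix (Fin k) (Fin 2) ℂ)
    (j : Matrix (Fin 2) (Fin k) ℂ) (p q : Fin k) :
    (hatX X i j * hatY Y i j - hatY Y i j * hatX X i j) (Sum.inr p) (Sum.inr q) =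
    (X * Y - Y * X + i * j) p q := by
  simp [hatX, hatY, rowm, colm, Matrix.mul_apply, Matrix.sub_apply, Matrix.add_apply,
    Fin.sum_univ_two, Fintype.sum_sum_type]
  ring

/-- [X,Y] + i j = 0 iff [X̂,Ŷ] has nonzero entries only in the first row
and the first column. -/
theorem stmt7 (k : ℕ) (X Y : Matrix (Fin k) (Fin k) ℂ) (i : Matrix (Fin k) (Fin 2) ℂ)
    (j : Matrix (Fin 2) (Fin k) ℂ) :
    X * Y - Y * X + i * j = 0 ↔
      ∀ p q : Fin k,
        (hatX X i j * hatY Y i j - hatY Y i j * hatX X i j) (Sum.inr p) (Sum.inr q) = 0 := by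
  constructor
  · intro h p q
    rw [key, h]; rfl
  · intro h
    ext p q
    rw [← key k X Y i j p q]
    exact h p q
end
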